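/- Let V be a finite type of users and let coupons be identified with their real values. Let p : V → ℝ → ℝ satisfy 0 ≤ p v d ≤ 1 for all v, d and be nondecreasing in d (d ≤ d' implies p v d ≤ p v d'). Let q : Finset V → ℝ be monotone (U ⊆ W implies q(U) ≤ q(W)) and submodular. For a coupon allocation S : Finset (V × ℝ), define the activation probability ρ_S(v) = p v (max of {d : (v,d) ∈ S}) if some pair (v,d) lies in S and ρ_S(v) = 0 otherwise, and for U : Finset V define Pr(U;S) = (∏_{u ∈ U} ρ_S(u)) · (∏_{v ∉ U} (1 − ρ_S(v))). Then the expected-cascade function g(S) = Σ_{U ⊆ V} Pr(U;S) · q(U) is monotone and submodular as a function of S : Finset (V × ℝ). -/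

import Mathlib

open Finset

/-- Activation probability of user `v` under allocation `S`: `p v` applied to the
largest coupon value offered to `v` in `S`, or `0` if `v` receives no coupon. -/
noncomputable def rho {V : Type*} [Fintype V] [DecidableEq V]
    (p : V → ℝ → ℝ) (S : Finset (V × ℝ)) (v : V) : ℝ :=
  if h : ((S.filter (fun e => e.1 = v)).image Prod.snd).Nonempty then
    p v (((S.filter (fun e => e.1 = v)).image Prod.snd).max' h)
  else 0

/-- Probability that exactly the set `U` of users becomes the seed set under
allocation `S`, users being activated independently. -/
noncomputable def prSeed {V : Type*} [Fintype V] [DecidableEq V]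
    (p : V → ℝ → ℝ) (U : Finset V) (S : Finset (V × ℝ)) : ℝ :=
  (∏ u ∈ U, rho p S u) * ∏ v ∈ Uᶜ, (1 - rho p S v)

/-- The expected cascade of allocation `S`. -/
noncomputable def expCascade {V : Type*} [Fintype V] [DecidableEq V]
    (p : V → ℝ → ℝ) (q : Finset V → ℝ) (S : Finset (V × ℝ)) : ℝ :=
  ∑ U : Finset V, prSeed p U S * q U

set_option linter.unusedSectionVars false

section Helpers

variable {V : Type*} [Fintype V] [DecidableEq V]

variable {V : Type*} [Fintype V] [DecidableEq V]

/-- Expected value of `q` under independent activation probabilities `r`. -/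
noncomputable def Gfun (q : Finset V → ℝ) (r : V → ℝ) : ℝ :=
  ∑ U : Finset V, (∏ u ∈ U, r u) * (∏ v ∈ Uᶜ, (1 - r v)) * q U

noncomputable def Dm (q : Finset V → ℝ) (r : V → ℝ) (w : V) : ℝ :=
  ∑ U ∈ (univ.erase w).powerset,
    (∏ u ∈ U, r u) * (∏ v ∈ univ.erase w \ U, (1 - r v)) * (q (insert w U) - q U)

lemma gen_affine (s : Finset V) (a : V) (ha : a ∉ s) (F : Finset V → ℝ) (r : V → ℝ) (t : ℝ) :
    (∑ U ∈ (insert a s).powerset,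
      (∏ u ∈ U, Function.update r a t u) *
        (∏ v ∈ insert a s \ U, (1 - Function.update r a t v)) * F U)
    = t * ∑ U ∈ s.powerset, (∏ u ∈ U, r u) * (∏ v ∈ s \ U, (1 - r v)) * (F (insert a U) - F U)
      + ∑ U ∈ s.powerset, (∏ u ∈ U, r u) * (∏ v ∈ s \ U, (1 - r v)) * F U := by
  rw [Finset.sum_powerset_insert ha]
  rw [Finset.mul_sum, ← Finset.sum_add_distrib, ← Finset.sum_add_distrib]
  refine Finset.sum_congr rfl fun U hU => ?_
  rw [Finset.mem_powerset] at hU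
  have haU : a ∉ U := fun h => ha (hU h)
  have h1 : insert a s \ U = insert a (s \ U) := by
    ext v; simp only [mem_sdiff, mem_insert]
    constructor
    · rintro ⟨h | h, h2⟩
      · exact Or.inl h
      · exact Or.inr ⟨h, h2⟩
    · rintro (rfl | ⟨h, h2⟩)
      · exact ⟨Or.inl rfl, haU⟩
      · exact ⟨Or.inr h, h2⟩
  have haSU : a ∉ s \ U := fun h => ha (mem_sdiff.1 h).1
  have h2 : insert a s \ insert a U = s \ U := by
    ext v; simp only [mem_sdiff, mem_insert, not_or]
    constructor
    · rintro ⟨h | h, h2, h3⟩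
      · exact absurd h h2
      · exact ⟨h, h3⟩
    · rintro ⟨h, h2⟩
      exact ⟨Or.inr h, fun hv => ha (hv ▸ h), h2⟩
  have hpU : ∀ (c : ℝ), (∏ u ∈ U, Function.update r a c u) = ∏ u ∈ U, r u := fun c =>
    Finset.prod_congr rfl fun u hu =>
      Function.update_of_ne (by rintro rfl; exact haU hu) _ _
  have hpSU : ∀ (c : ℝ), (∏ v ∈ s \ U, (1 - Function.update r a c v)) = ∏ v ∈ s \ U, (1 - r v) :=
    fun c => Finset.prod_congr rfl fun v hv => by
      rw [Function.update_of_ne (by rintro rfl; exact haSU hv)]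
  rw [h1, h2, Finset.prod_insert haSU, Finset.prod_insert haU, hpU t, hpSU t,
    Function.update_self]
  ring

lemma G_update (q : Finset V → ℝ) (r : V → ℝ) (w : V) (t : ℝ) :
    Gfun q (Function.update r w t)
      = t * Dm q r w
        + ∑ U ∈ (univ.erase w).powerset,
            (∏ u ∈ U, r u) * (∏ v ∈ univ.erase w \ U, (1 - r v)) * q U := by
  have huniv : insert w (univ.erase w) = (univ : Finset V) := insert_erase (mem_univ w)
  have := gen_affine (univ.erase w) w (notMem_erase w univ) q r t
  rw [huniv] at this
  rw [Gfun, Dm, ← this]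
  rw [← Finset.powerset_univ]
  refine Finset.sum_congr rfl fun U _ => ?_
  rw [compl_eq_univ_sdiff]

lemma G_diff (q : Finset V → ℝ) (r : V → ℝ) (w : V) (a b : ℝ) :
    Gfun q (Function.update r w b) - Gfun q (Function.update r w a)
      = (b - a) * Dm q r w := by
  rw [G_update, G_update]; ring

lemma Dm_update_self (q : Finset V → ℝ) (r : V → ℝ) (w : V) (t : ℝ) :
    Dm q (Function.update r w t) w = Dm q r w := by
  refine Finset.sum_congr rfl fun U hU => ?_
  rw [Finset.mem_powerset] at hU
  have hw : w ∉ U := fun h => notMem_erase w univ (hU h)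
  congr 1
  congr 1
  · exact Finset.prod_congr rfl fun u hu =>
      Function.update_of_ne (by rintro rfl; exact hw hu) _ _
  · refine Finset.prod_congr rfl fun v hv => ?_
    have : v ≠ w := ne_of_mem_erase (mem_sdiff.1 hv).1
    rw [Function.update_of_ne this]

lemma Dm_update (q : Finset V → ℝ) (r : V → ℝ) (w u : V) (hu : u ≠ w) (t : ℝ) :
    Dm q (Function.update r u t) w
      = t * ∑ U ∈ ((univ.erase w).erase u).powerset,
            (∏ x ∈ U, r x) * (∏ v ∈ (univ.erase w).erase u \ U, (1 - r v)) *
              ((q (insert w (insert u U)) - q (insert u U)) - (q (insert w U) - q U))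
        + ∑ U ∈ ((univ.erase w).erase u).powerset,
            (∏ x ∈ U, r x) * (∏ v ∈ (univ.erase w).erase u \ U, (1 - r v)) *
              (q (insert w U) - q U) := by
  have hmem : u ∈ univ.erase w := mem_erase.2 ⟨hu, mem_univ u⟩
  have hins : insert u ((univ.erase w).erase u) = univ.erase w := insert_erase hmem
  have := gen_affine ((univ.erase w).erase u) u (notMem_erase u _)
    (fun U => q (insert w U) - q U) r t
  rw [hins] at this
  exact this

lemma Dm_nonneg (q : Finset V → ℝ) (hq : ∀ U W : Finset V, U ⊆ W → q U ≤ q W)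
    (r : V → ℝ) (hr0 : ∀ v, 0 ≤ r v) (hr1 : ∀ v, r v ≤ 1) (w : V) :
    0 ≤ Dm q r w := by
  refine Finset.sum_nonneg fun U _ => ?_
  refine mul_nonneg (mul_nonneg (Finset.prod_nonneg fun u _ => hr0 u)
    (Finset.prod_nonneg fun v _ => by linarith [hr1 v])) ?_
  have := hq U (insert w U) (subset_insert w U)
  linarith

lemma Dm_antitone_step (q : Finset V → ℝ)
    (hqsub : ∀ X Y : Finset V, X ⊆ Y → ∀ x ∉ Y,
      q (insert x X) - q X ≥ q (insert x Y) - q Y)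
    (r : V → ℝ) (hr0 : ∀ v, 0 ≤ r v) (hr1 : ∀ v, r v ≤ 1)
    (w u : V) (hu : u ≠ w) (a b : ℝ) (hab : a ≤ b) :
    Dm q (Function.update r u b) w ≤ Dm q (Function.update r u a) w := by
  rw [Dm_update q r w u hu, Dm_update q r w u hu]
  have hE : (∑ U ∈ ((univ.erase w).erase u).powerset,
      (∏ x ∈ U, r x) * (∏ v ∈ (univ.erase w).erase u \ U, (1 - r v)) *
        ((q (insert w (insert u U)) - q (insert u U)) - (q (insert w U) - q U))) ≤ 0 := by
    refine Finset.sum_nonpos fun U hU => ?_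
    rw [Finset.mem_powerset] at hU
    have hwU : w ∉ insert u U := by
      intro h
      rcases Finset.mem_insert.1 h with h | h
      · exact hu h.symm
      · exact notMem_erase w univ (Finset.erase_subset _ _ (hU h))
    have := hqsub U (insert u U) (subset_insert u U) w hwU
    refine mul_nonpos_of_nonneg_of_nonpos ?_ (by linarith)
    exact mul_nonneg (Finset.prod_nonneg fun x _ => hr0 x)
      (Finset.prod_nonneg fun v _ => by linarith [hr1 v])
  nlinarith

/-- Hybrid function. -/
noncomputable def hyb (r s : V → ℝ) (T : Finset V) : V → ℝ :=
  fun v => if v ∈ T then s v else r v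

lemma hyb_insert (r s : V → ℝ) (T : Finset V) (a : V) (ha : a ∉ T) :
    hyb r s (insert a T) = Function.update (hyb r s T) a (s a) := by
  funext v
  by_cases h : v = a
  · subst h; simp [hyb, Function.update_self]
  · simp [hyb, Function.update_of_ne h, Finset.mem_insert, h]

lemma hyb_bounds (r s : V → ℝ) (hr0 : ∀ v, 0 ≤ r v) (hr1 : ∀ v, r v ≤ 1)
    (hs0 : ∀ v, 0 ≤ s v) (hs1 : ∀ v, s v ≤ 1) (T : Finset V) :
    (∀ v, 0 ≤ hyb r s T v) ∧ (∀ v, hyb r s T v ≤ 1) := by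
  constructor <;> intro v <;> unfold hyb <;> split <;> first | exact hs0 v | exact hr0 v | exact hs1 v | exact hr1 v

lemma G_mono (q : Finset V → ℝ) (hq : ∀ U W : Finset V, U ⊆ W → q U ≤ q W)
    (r s : V → ℝ) (hr0 : ∀ v, 0 ≤ r v) (hr1 : ∀ v, r v ≤ 1)
    (hs0 : ∀ v, 0 ≤ s v) (hs1 : ∀ v, s v ≤ 1) (hrs : ∀ v, r v ≤ s v) :
    Gfun q r ≤ Gfun q s := by
  have key : ∀ T : Finset V, Gfun q r ≤ Gfun q (hyb r s T) := by
    intro T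
    induction T using Finset.induction with
    | empty =>
      have h0 : hyb r s ∅ = r := by funext v; simp [hyb]
      rw [h0]
    | @insert a T ha ih =>
      refine le_trans ih ?_
      rw [hyb_insert r s T a ha]
      obtain ⟨hb0, hb1⟩ := hyb_bounds r s hr0 hr1 hs0 hs1 T
      have hTa : hyb r s T a = r a := by simp [hyb, ha]
      have hd := G_diff q (hyb r s T) a (hyb r s T a) (s a)
      rw [Function.update_eq_self] at hd
      have hD := Dm_nonneg q hq (hyb r s T) hb0 hb1 a
      nlinarith [hrs a, hTa ▸ hrs a]
  have : hyb r s univ = s := by funext v; simp [hyb]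
  simpa [this] using key univ

lemma Dm_antitone (q : Finset V → ℝ)
    (hqsub : ∀ X Y : Finset V, X ⊆ Y → ∀ x ∉ Y,
      q (insert x X) - q X ≥ q (insert x Y) - q Y)
    (r s : V → ℝ) (hr0 : ∀ v, 0 ≤ r v) (hr1 : ∀ v, r v ≤ 1)
    (hs0 : ∀ v, 0 ≤ s v) (hs1 : ∀ v, s v ≤ 1) (hrs : ∀ v, r v ≤ s v) (w : V) :
    Dm q s w ≤ Dm q r w := by
  have key : ∀ T : Finset V, Dm q (hyb r s T) w ≤ Dm q r w := by
    intro T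
    induction T using Finset.induction with
    | empty =>
      have h0 : hyb r s ∅ = r := by funext v; simp [hyb]
      rw [h0]
    | @insert a T ha ih =>
      refine le_trans ?_ ih
      rw [hyb_insert r s T a ha]
      obtain ⟨hb0, hb1⟩ := hyb_bounds r s hr0 hr1 hs0 hs1 T
      have hTa : hyb r s T a = r a := by simp [hyb, ha]
      by_cases haw : a = w
      · subst haw
        rw [Dm_update_self]
      · have := Dm_antitone_step q hqsub (hyb r s T) hb0 hb1 w a haw
          (hyb r s T a) (s a) (hTa ▸ hrs a)
        rw [Function.update_eq_self] at this
        exact this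
  have : hyb r s univ = s := by funext v; simp [hyb]
  simpa [this] using key univ

lemma rho_nonneg (p : V → ℝ → ℝ) (hp0 : ∀ v d, 0 ≤ p v d) (S : Finset (V × ℝ)) (v : V) :
    0 ≤ rho p S v := by
  unfold rho; split
  · exact hp0 _ _
  · exact le_refl 0

lemma rho_le_one (p : V → ℝ → ℝ) (hp1 : ∀ v d, p v d ≤ 1) (S : Finset (V × ℝ)) (v : V) :
    rho p S v ≤ 1 := by
  unfold rho; split
  · exact hp1 _ _
  · exact zero_le_one

lemma rho_mono (p : V → ℝ → ℝ) (hp0 : ∀ v d, 0 ≤ p v d)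
    (hpmono : ∀ v, ∀ d d' : ℝ, d ≤ d' → p v d ≤ p v d')
    {S T : Finset (V × ℝ)} (hST : S ⊆ T) (v : V) : rho p S v ≤ rho p T v := by
  unfold rho
  have hsub : (S.filter (fun e => e.1 = v)).image Prod.snd ⊆
      (T.filter (fun e => e.1 = v)).image Prod.snd :=
    Finset.image_subset_image (Finset.filter_subset_filter _ hST)
  split
  · rename_i hS
    rw [dif_pos (hS.mono hsub)]
    exact hpmono v _ _ (Finset.max'_subset hS hsub)
  · split
    · exact hp0 _ _
    · exact le_refl 0

lemma rho_insert (p : V → ℝ → ℝ) (hp0 : ∀ v d, 0 ≤ p v d)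
    (hpmono : ∀ v, ∀ d d' : ℝ, d ≤ d' → p v d ≤ p v d')
    (X : Finset (V × ℝ)) (w : V) (d : ℝ) :
    rho p (insert (w, d) X) = Function.update (rho p X) w (max (rho p X w) (p w d)) := by
  funext v
  by_cases hv : v = w
  · subst hv
    rw [Function.update_self]
    have hfil : (insert (v, d) X).filter (fun e => e.1 = v)
        = insert (v, d) (X.filter (fun e => e.1 = v)) := by
      rw [Finset.filter_insert, if_pos rfl]
    simp only [rho, hfil, Finset.image_insert]
    by_cases hne : ((X.filter (fun e => e.1 = v)).image Prod.snd).Nonempty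
    · rw [dif_pos (Finset.insert_nonempty _ _), dif_pos hne, Finset.max'_insert (H := hne)]
      rcases le_total (((X.filter (fun e => e.1 = v)).image Prod.snd).max' hne) d with h | h
      · rw [sup_eq_left.2 h, max_eq_right (hpmono v _ _ h)]
      · rw [sup_eq_right.2 h, max_eq_left (hpmono v _ _ h)]
    · rw [dif_pos (Finset.insert_nonempty _ _), dif_neg hne]
      rw [Finset.not_nonempty_iff_eq_empty] at hne
      simp only [hne]
      rw [sup_eq_right.2 (hp0 v d)]
      exact congrArg (p v) (Finset.max'_singleton d)
  · rw [Function.update_of_ne hv]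
    simp only [rho]
    have hfil : (insert (w, d) X).filter (fun e => e.1 = v) = X.filter (fun e => e.1 = v) := by
      rw [Finset.filter_insert, if_neg (by simpa using Ne.symm hv)]
    simp only [hfil]

end Helpers

theorem expCascade_monotone_and_submodular
    {V : Type*} [Fintype V] [DecidableEq V]
    (p : V → ℝ → ℝ)
    (hp0 : ∀ v d, 0 ≤ p v d) (hp1 : ∀ v d, p v d ≤ 1)
    (hpmono : ∀ v, ∀ d d' : ℝ, d ≤ d' → p v d ≤ p v d')
    (q : Finset V → ℝ)
    (hqmono : ∀ U W : Finset V, U ⊆ W → q U ≤ q W)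
    (hqsub : ∀ X Y : Finset V, X ⊆ Y → ∀ x ∉ Y,
      q (insert x X) - q X ≥ q (insert x Y) - q Y) :
    (∀ S T : Finset (V × ℝ), S ⊆ T → expCascade p q S ≤ expCascade p q T) ∧
    (∀ X Y : Finset (V × ℝ), X ⊆ Y → ∀ e ∉ Y,
      expCascade p q (insert e X) - expCascade p q X ≥
        expCascade p q (insert e Y) - expCascade p q Y) := by
  classical
  have hexp : ∀ S, expCascade p q S = Gfun q (rho p S) := fun S => rfl
  have hr0 : ∀ S v, 0 ≤ rho p S v := fun S => rho_nonneg p hp0 S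
  have hr1 : ∀ S v, rho p S v ≤ 1 := fun S => rho_le_one p hp1 S
  constructor
  · intro S T hST
    rw [hexp, hexp]
    exact G_mono q hqmono _ _ (hr0 S) (hr1 S) (hr0 T) (hr1 T)
      (fun v => rho_mono p hp0 hpmono hST v)
  · intro X Y hXY e _
    obtain ⟨w, d⟩ := e
    have hX := rho_insert p hp0 hpmono X w d
    have hY := rho_insert p hp0 hpmono Y w d
    rw [hexp, hexp, hexp, hexp, hX, hY]
    set rX := rho p X with hrX
    set rY := rho p Y with hrY
    have hdX : Gfun q (Function.update rX w (max (rX w) (p w d))) - Gfun q rX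
        = (max (rX w) (p w d) - rX w) * Dm q rX w := by
      have h := G_diff q rX w (rX w) (max (rX w) (p w d))
      rw [Function.update_eq_self] at h
      linarith [h]
    have hdY : Gfun q (Function.update rY w (max (rY w) (p w d))) - Gfun q rY
        = (max (rY w) (p w d) - rY w) * Dm q rY w := by
      have h := G_diff q rY w (rY w) (max (rY w) (p w d))
      rw [Function.update_eq_self] at h
      linarith [h]
    have hrXY : ∀ v, rX v ≤ rY v := fun v => rho_mono p hp0 hpmono hXY v
    have hDY0 : 0 ≤ Dm q rY w := Dm_nonneg q hqmono rY (hr0 Y) (hr1 Y) w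
    have hDXY : Dm q rY w ≤ Dm q rX w :=
      Dm_antitone q hqsub rX rY (hr0 X) (hr1 X) (hr0 Y) (hr1 Y) hrXY w
    have hcY : 0 ≤ max (rY w) (p w d) - rY w := sub_nonneg.2 (le_max_left _ _)
    have hcXY : max (rY w) (p w d) - rY w ≤ max (rX w) (p w d) - rX w := by
      rcases le_total (rX w) (p w d) with h | h
      · rcases le_total (rY w) (p w d) with h2 | h2
        · rw [max_eq_right h, max_eq_right h2]; linarith [hrXY w]
        · rw [max_eq_right h, max_eq_left h2]; linarith
      · have h2 : p w d ≤ rY w := le_trans h (hrXY w)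
        rw [max_eq_left h, max_eq_left h2]; linarith
    rw [hdX, hdY]
    exact mul_le_mul hcXY hDXY hDY0 (le_trans hcY hcXY)
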